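/- Let n be a natural number and let S, T be subspaces of ℂⁿ such that 2 · dim α(S,T) = n, where α(S,T) = ((T ⊔ Sᗮ) ⊓ S) ⊓ (S ⊓ T)ᗮ. Then α(S,T) = P(T,S), i.e., ((T ⊔ Sᗮ) ⊓ S) ⊓ (S ⊓ T)ᗮ = (T ⊔ Sᗮ) ⊓ S. -/

import Mathlib

/-- If `2 · dim α(S,T) = n`, then `α(S,T) = P(T,S)`, i.e.
`((T ⊔ Sᗮ) ⊓ S) ⊓ (S ⊓ T)ᗮ = (T ⊔ Sᗮ) ⊓ S`. -/
theorem stmt_10 (n : ℕ) (S T : Submodule ℂ (EuclideanSpace ℂ (Fin n)))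
    (h : 2 * Module.finrank ℂ
        ((((T ⊔ Sᗮ) ⊓ S) ⊓ (S ⊓ T)ᗮ) : Submodule ℂ (EuclideanSpace ℂ (Fin n))) = n) :
    ((T ⊔ Sᗮ) ⊓ S) ⊓ (S ⊓ T)ᗮ = (T ⊔ Sᗮ) ⊓ S := by
  suffices hbot : S ⊓ T = ⊥ by
    rw [hbot, Submodule.bot_orthogonal_eq_top, inf_top_eq]
  set K := S ⊓ T with hK
  set P := (T ⊔ Sᗮ) ⊓ S with hP
  set A := P ⊓ Kᗮ with hA
  -- dimension notations
  have hn : Module.finrank ℂ (⊤ : Submodule ℂ (EuclideanSpace ℂ (Fin n))) = n := by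
    rw [finrank_top, finrank_euclideanSpace_fin]
  have htop : T ⊔ Sᗮ ⊔ S = ⊤ := by
    rw [sup_assoc, sup_comm Sᗮ S, Submodule.sup_orthogonal_of_hasOrthogonalProjection, sup_top_eq]
  -- A ⊓ K = ⊥
  have hAK : A ⊓ K = ⊥ := by
    rw [le_bot_iff.symm]
    calc A ⊓ K ≤ Kᗮ ⊓ K := inf_le_inf (inf_le_right) le_rfl
    _ = ⊥ := by rw [inf_comm]; exact Submodule.inf_orthogonal_eq_bot K
  have e1 : Module.finrank ℂ (A ⊔ K : Submodule ℂ (EuclideanSpace ℂ (Fin n)))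
      = Module.finrank ℂ A + Module.finrank ℂ K := by
    have := Submodule.finrank_sup_add_finrank_inf_eq A K
    rw [hAK, finrank_bot] at this
    omega
  have hKP : K ≤ P := le_inf (le_trans inf_le_right le_sup_left) inf_le_left
  have hAKP : A ⊔ K ≤ P := sup_le inf_le_left hKP
  have hAKS : A ⊔ K ≤ S := sup_le (le_trans inf_le_left inf_le_right) inf_le_left
  have m1 : Module.finrank ℂ A + Module.finrank ℂ K ≤ Module.finrank ℂ P := by
    rw [← e1]; exact Submodule.finrank_mono hAKP
  have m2 : Module.finrank ℂ A + Module.finrank ℂ K ≤ Module.finrank ℂ S := by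
    rw [← e1]; exact Submodule.finrank_mono hAKS
  have e2 : Module.finrank ℂ (⊤ : Submodule ℂ (EuclideanSpace ℂ (Fin n))) + Module.finrank ℂ P
      = Module.finrank ℂ (T ⊔ Sᗮ : Submodule ℂ (EuclideanSpace ℂ (Fin n))) + Module.finrank ℂ S := by
    rw [← htop]; exact Submodule.finrank_sup_add_finrank_inf_eq (T ⊔ Sᗮ) S
  have e3 : Module.finrank ℂ (T ⊔ Sᗮ : Submodule ℂ (EuclideanSpace ℂ (Fin n))) + Module.finrank ℂ (T ⊓ Sᗮ : Submodule ℂ (EuclideanSpace ℂ (Fin n)))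
      = Module.finrank ℂ T + Module.finrank ℂ Sᗮ :=
    Submodule.finrank_sup_add_finrank_inf_eq T Sᗮ
  have e4 : Module.finrank ℂ S + Module.finrank ℂ Sᗮ = n := by
    rw [Submodule.finrank_add_finrank_orthogonal, finrank_euclideanSpace_fin]
  have e5 : Module.finrank ℂ (S ⊔ T : Submodule ℂ (EuclideanSpace ℂ (Fin n))) + Module.finrank ℂ K
      = Module.finrank ℂ S + Module.finrank ℂ T :=
    Submodule.finrank_sup_add_finrank_inf_eq S T
  have m3 : Module.finrank ℂ (S ⊔ T : Submodule ℂ (EuclideanSpace ℂ (Fin n))) ≤ n := by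
    calc Module.finrank ℂ (S ⊔ T : Submodule ℂ (EuclideanSpace ℂ (Fin n)))
        ≤ Module.finrank ℂ (EuclideanSpace ℂ (Fin n)) := Submodule.finrank_le _
    _ = n := finrank_euclideanSpace_fin
  have hK0 : Module.finrank ℂ K = 0 := by omega
  exact Submodule.finrank_eq_zero.mp hK0
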